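/- The sequence E(n) = 2√π·(n/(2e))^{n/2}/Γ((n+1)/2) of entropies of round spheres converges to √2 as n → ∞. -/

import Mathlib

open Real Filter Stirling Nat

/-- Stone's formula for the entropy of the round `n`-sphere (with `0 ^ 0 = 1`). -/
noncomputable def sphereEntropy (n : ℕ) : ℝ :=
  2 * Real.sqrt Real.pi * ((n : ℝ) / (2 * Real.exp 1)) ^ ((n : ℝ) / 2) /
    Real.Gamma (((n : ℝ) + 1) / 2)

lemma gamma_nat_add_half (m : ℕ) :
    Real.Gamma ((m : ℝ) + 1 / 2) =
      (Nat.factorial (2 * m)) * Real.sqrt Real.pi / (4 ^ m * Nat.factorial m) := by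
  induction m with
  | zero =>
    rw [show ((0:ℕ):ℝ) + 1/2 = 1/2 by norm_num, Real.Gamma_one_half_eq]
    simp
  | succ k ih =>
    have h : ((k : ℝ) + 1) + 1 / 2 = ((k : ℝ) + 1 / 2) + 1 := by ring
    push_cast
    rw [h, Real.Gamma_add_one (by positivity), ih]
    have h4 : (4 : ℝ) ^ (k + 1) = 4 * 4 ^ k := by ring
    have hf : (Nat.factorial (2 * (k + 1)) : ℝ) =
        (2 * k + 2) * (2 * k + 1) * Nat.factorial (2 * k) := by
      have : 2 * (k + 1) = (2 * k + 1) + 1 := by ring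
      rw [this, Nat.factorial_succ]
      have : 2 * k + 1 = (2 * k) + 1 := rfl
      rw [this, Nat.factorial_succ]
      push_cast; ring
    have hg : (Nat.factorial (k + 1) : ℝ) = (k + 1) * Nat.factorial k := by
      rw [Nat.factorial_succ]; push_cast; ring
    rw [hf, hg]
    have hk : (Nat.factorial k : ℝ) ≠ 0 := by positivity
    have hk2 : (Nat.factorial (2 * k) : ℝ) ≠ 0 := by positivity
    field_simp
    ring

lemma sphereEntropy_even (m : ℕ) (hm : 1 ≤ m) :
    sphereEntropy (2 * m) = Real.sqrt 2 * stirlingSeq m / stirlingSeq (2 * m) := by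
  have hm' : (0 : ℝ) < m := by exact_mod_cast hm
  have he : (0 : ℝ) < Real.exp 1 := Real.exp_pos 1
  have hA : (0 : ℝ) < (m : ℝ) / Real.exp 1 := by positivity
  unfold sphereEntropy stirlingSeq
  have harg : (((2 * m : ℕ) : ℝ) + 1) / 2 = (m : ℝ) + 1 / 2 := by push_cast; ring
  rw [harg, gamma_nat_add_half]
  have hbase : ((2 * m : ℕ) : ℝ) / (2 * Real.exp 1) = (m : ℝ) / Real.exp 1 := by
    push_cast; field_simp
  have hexp : ((2 * m : ℕ) : ℝ) / 2 = (m : ℕ) := by push_cast; ring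
  rw [hbase, hexp, Real.rpow_natCast]
  have hsq : Real.sqrt (2 * ((2 * m : ℕ) : ℝ)) = Real.sqrt 2 * Real.sqrt (2 * m) := by
    push_cast
    rw [show (2 : ℝ) * (2 * m) = 2 * (2 * (m : ℝ)) by ring, Real.sqrt_mul (by norm_num)]
  have hpow : (((2 * m : ℕ) : ℝ) / Real.exp 1) ^ (2 * m)
      = 4 ^ m * (((m : ℝ) / Real.exp 1) ^ m) ^ 2 := by
    push_cast
    rw [show (2 : ℝ) * m / Real.exp 1 = 2 * ((m : ℝ) / Real.exp 1) by ring, mul_pow,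
      pow_mul, pow_mul]
    norm_num; ring
  rw [hsq, hpow]
  have hπ : Real.sqrt Real.pi ≠ 0 := by positivity
  have hs2 : Real.sqrt (2 * (m : ℝ)) ≠ 0 := by positivity
  have h2 : Real.sqrt 2 ≠ 0 := by positivity
  have hA' : ((m : ℝ) / Real.exp 1) ^ m ≠ 0 := by positivity
  have hf1 : (Nat.factorial m : ℝ) ≠ 0 := by positivity
  have hf2 : (Nat.factorial (2 * m) : ℝ) ≠ 0 := by positivity
  have h22 : Real.sqrt 2 * Real.sqrt 2 = 2 := Real.mul_self_sqrt (by norm_num)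
  field_simp
  linear_combination (-1 : ℝ) * h22

lemma sphereEntropy_odd (m : ℕ) (hm : 1 ≤ m) :
    sphereEntropy (2 * m + 1) = 2 * Real.sqrt Real.pi / stirlingSeq m *
      (1 + (1 / 2) / (m : ℝ)) ^ m *
      Real.sqrt ((2 * (m : ℝ) + 1) / (4 * m * Real.exp 1)) := by
  have hm' : (0 : ℝ) < m := by exact_mod_cast hm
  have he := Real.exp_pos 1
  have hB : (0 : ℝ) < ((2 * m + 1 : ℕ) : ℝ) / (2 * Real.exp 1) := by positivity
  unfold sphereEntropy stirlingSeq
  have harg : (((2 * m + 1 : ℕ) : ℝ) + 1) / 2 = (m : ℝ) + 1 := by push_cast; ring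
  rw [harg, Real.Gamma_nat_eq_factorial]
  have hexp : ((2 * m + 1 : ℕ) : ℝ) / 2 = (m : ℝ) + 1 / 2 := by push_cast; ring
  rw [hexp, Real.rpow_add hB, Real.rpow_natCast, ← Real.sqrt_eq_rpow]
  have h1 : (2 * (m : ℝ) + 1) / (4 * m * Real.exp 1)
      = (((2 * m + 1 : ℕ) : ℝ) / (2 * Real.exp 1)) / (2 * m) := by
    push_cast; field_simp; norm_num
  rw [h1, Real.sqrt_div hB.le]
  have h2 : ((2 * m + 1 : ℕ) : ℝ) / (2 * Real.exp 1)
      = ((m : ℝ) / Real.exp 1) * (1 + (1 / 2) / (m : ℝ)) := by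
    push_cast; field_simp
  rw [h2, mul_pow]
  have hf : (Nat.factorial m : ℝ) ≠ 0 := by positivity
  have hs2 : Real.sqrt (2 * (m : ℝ)) ≠ 0 := by positivity
  have hA : ((m : ℝ) / Real.exp 1) ^ m ≠ 0 := by positivity
  field_simp

lemma tendsto_of_even_odd {u : ℕ → ℝ} {l : ℝ}
    (he : Filter.Tendsto (fun m => u (2 * m)) Filter.atTop (nhds l))
    (ho : Filter.Tendsto (fun m => u (2 * m + 1)) Filter.atTop (nhds l)) :
    Filter.Tendsto u Filter.atTop (nhds l) := by
  rw [Filter.tendsto_def] at *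
  intro s hs
  obtain ⟨N1, h1⟩ := Filter.mem_atTop_sets.mp (he s hs)
  obtain ⟨N2, h2⟩ := Filter.mem_atTop_sets.mp (ho s hs)
  refine Filter.mem_atTop_sets.mpr ⟨2 * (N1 + N2) + 2, fun n hn => ?_⟩
  rcases Nat.even_or_odd n with ⟨k, hk⟩ | ⟨k, hk⟩
  · have hk' : n = 2 * k := by omega
    rw [Set.mem_preimage, hk']
    exact h1 k (by omega)
  · have hk' : n = 2 * k + 1 := by omega
    rw [Set.mem_preimage, hk']
    exact h2 k (by omega)

theorem sphereEntropy_tendsto_sqrt_two :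
    Filter.Tendsto sphereEntropy Filter.atTop (nhds (Real.sqrt 2)) := by
  have hπ : Real.sqrt Real.pi ≠ 0 := by positivity
  have hs := Stirling.tendsto_stirlingSeq_sqrt_pi
  have hs2 : Filter.Tendsto (fun m => stirlingSeq (2 * m)) Filter.atTop
      (nhds (Real.sqrt Real.pi)) :=
    hs.comp (Filter.tendsto_atTop_atTop.mpr fun b => ⟨b, fun a ha => by omega⟩)
  apply tendsto_of_even_odd
  · have h : Filter.Tendsto (fun m => Real.sqrt 2 * stirlingSeq m / stirlingSeq (2 * m))
        Filter.atTop (nhds (Real.sqrt 2 * Real.sqrt Real.pi / Real.sqrt Real.pi)) :=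
      (hs.const_mul _).div hs2 hπ
    rw [mul_div_assoc, div_self hπ, mul_one] at h
    exact h.congr' ((Filter.eventually_ge_atTop 1).mono fun m hm =>
      (sphereEntropy_even m hm).symm)
  · have h1 : Filter.Tendsto (fun m : ℕ => 2 * Real.sqrt Real.pi / stirlingSeq m)
        Filter.atTop (nhds (2 * Real.sqrt Real.pi / Real.sqrt Real.pi)) :=
      tendsto_const_nhds.div hs hπ
    rw [mul_div_assoc, div_self hπ, mul_one] at h1
    have h2 := Real.tendsto_one_add_div_pow_exp (1 / 2)
    have h3 : Filter.Tendsto (fun m : ℕ => (2 * (m : ℝ) + 1) / (4 * m * Real.exp 1))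
        Filter.atTop (nhds (1 / (2 * Real.exp 1))) := by
      have hb : Filter.Tendsto (fun m : ℕ => ((2 : ℝ) + 1 / m) / (4 * Real.exp 1))
          Filter.atTop (nhds ((2 + 0) / (4 * Real.exp 1))) :=
        (tendsto_const_nhds.add tendsto_one_div_atTop_nhds_zero_nat).div_const _
      rw [add_zero, show (2 : ℝ) / (4 * Real.exp 1) = 1 / (2 * Real.exp 1) by
        field_simp; ring] at hb
      refine hb.congr' ((Filter.eventually_ge_atTop 1).mono fun m hm => ?_)
      have hm' : (0 : ℝ) < m := by exact_mod_cast hm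
      have he := Real.exp_pos 1
      field_simp
    have hprod := (h1.mul h2).mul h3.sqrt
    have hval : 2 * Real.exp (1 / 2) * Real.sqrt (1 / (2 * Real.exp 1)) = Real.sqrt 2 := by
      rw [Real.exp_half, mul_assoc, ← Real.sqrt_mul (Real.exp_pos 1).le,
        show Real.exp 1 * (1 / (2 * Real.exp 1)) = 2⁻¹ by field_simp, Real.sqrt_inv]
      have h22 : Real.sqrt 2 * Real.sqrt 2 = 2 := Real.mul_self_sqrt (by norm_num)
      have h2ne : Real.sqrt 2 ≠ 0 := by positivity
      field_simp
      rw [sq, h22]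
    rw [hval] at hprod
    exact hprod.congr' ((Filter.eventually_ge_atTop 1).mono fun m hm =>
      (sphereEntropy_odd m hm).symm)
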